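/- (Limit point direction of the degenerate-coefficient criterion.) Let c < b be reals, let n ≥ 2 be a natural number, let φ : ℝ → ℝ be continuously differentiable on [c,b] with φ(t) > 0 for all t ∈ [c,b], and set p(t) = (b−t)^n·φ(t). Let q : ℝ → ℝ be continuous on [c,b] and let γ ∈ ℝ with q(t) > γ for all t ∈ [c,b). Let u : ℝ → ℝ be differentiable on [c,b) with t ↦ p(t)·(deriv u)(t) differentiable on [c,b), satisfying deriv(t ↦ p(t)·(deriv u)(t))(x) = (q(x) − γ)·u(x) for all x ∈ [c,b), with u(c) = 1 and (deriv u)(c) = 0. Then u² is not integrable on (c,b); hence when p vanishes at b to order n ≥ 2, the endpoint b is in the limit point case. -/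

import Mathlib

set_option maxHeartbeats 1000000

open MeasureTheory

/-- Limit point direction of the degenerate-coefficient criterion: if
`p(t) = (b−t)^n·φ(t)` with `n ≥ 2` and `φ` continuously differentiable and positive on
`[c,b]`, then the solution `u` of `(p·u')' = (q − γ)·u` on `[c,b)` with `u(c) = 1`,
`u'(c) = 0` is not in `L²(c,b)`; hence `b` is in the limit point case. -/
theorem limit_point_of_degenerate_order_ge_two
    (c b : ℝ) (hcb : c < b)
    (n : ℕ) (hn : 2 ≤ n)
    (φ : ℝ → ℝ)
    (hφ : ContDiffOn ℝ 1 φ (Set.Icc c b))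
    (hφpos : ∀ t ∈ Set.Icc c b, 0 < φ t)
    (p : ℝ → ℝ) (hpdef : ∀ t, p t = (b - t) ^ n * φ t)
    (q : ℝ → ℝ) (hq : ContinuousOn q (Set.Icc c b))
    (γ : ℝ) (hqγ : ∀ t ∈ Set.Ico c b, γ < q t)
    (u : ℝ → ℝ)
    (hu : ∀ t ∈ Set.Ico c b, DifferentiableAt ℝ u t)
    (hpu : ∀ t ∈ Set.Ico c b, DifferentiableAt ℝ (fun s => p s * deriv u s) t)
    (heq : ∀ t ∈ Set.Ico c b,
      deriv (fun s => p s * deriv u s) t = (q t - γ) * u t)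
    (hu0 : u c = 1) (hu'0 : deriv u c = 0) :
    ¬ IntegrableOn (fun x => u x ^ 2) (Set.Ioo c b) := by
  set v : ℝ → ℝ := fun s => p s * deriv u s with hvdef
  have hppos : ∀ t ∈ Set.Ico c b, 0 < p t := by
    intro t ht
    rw [hpdef]
    have h1 : 0 < b - t := by linarith [ht.2]
    exact mul_pos (pow_pos h1 n) (hφpos t ⟨ht.1, ht.2.le⟩)
  have hvc : v c = 0 := by simp [hvdef, hu'0]
  have hderiv_u_eq : ∀ t ∈ Set.Ico c b, deriv u t = v t / p t := by
    intro t ht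
    field_simp [hvdef, (hppos t ht).ne']
    simp only [hvdef]; ring
  -- Step A: u ≥ 1 on initial segments and v ≥ 0
  have stepA : ∀ t' ∈ Set.Ico c b, (∀ s ∈ Set.Icc c t', 1 ≤ u s) ∧ 0 ≤ v t' := by
    intro t' ht'
    set S : Set ℝ := {t | t ∈ Set.Icc c t' ∧ ∀ s ∈ Set.Icc c t, 0 ≤ u s} with hSdef
    have hcS : c ∈ S := ⟨⟨le_refl c, ht'.1⟩, fun s hs => by
      have hsc : s = c := le_antisymm hs.2 hs.1
      simp [hsc, hu0]⟩
    have hSne : S.Nonempty := ⟨c, hcS⟩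
    have hSbdd : BddAbove S := ⟨t', fun t ht => ht.1.2⟩
    set m : ℝ := sSup S with hmdef
    have hcm : c ≤ m := le_csSup hSbdd hcS
    have hmt' : m ≤ t' := csSup_le hSne (fun t ht => ht.1.2)
    have hmb : m < b := lt_of_le_of_lt hmt' ht'.2
    have hun0 : ∀ s ∈ Set.Ico c m, 0 ≤ u s := by
      intro s hs
      obtain ⟨t, htS, hst⟩ := exists_lt_of_lt_csSup hSne hs.2
      exact htS.2 s ⟨hs.1, hst.le⟩
    have hun0' : ∀ s ∈ Set.Icc c m, 0 ≤ u s := by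
      intro s hs
      rcases lt_or_eq_of_le hs.2 with h | h
      · exact hun0 s ⟨hs.1, h⟩
      · rw [h]
        rcases eq_or_lt_of_le hcm with h2 | h2
        · rw [← h2, hu0]; norm_num
        · have hne : (nhdsWithin m (Set.Ico c m)).NeBot := by
            apply mem_closure_iff_nhdsWithin_neBot.1
            rw [closure_Ico h2.ne]
            exact ⟨hcm, le_refl m⟩
          exact ge_of_tendsto ((hu m ⟨hcm, hmb⟩).continuousAt.continuousWithinAt)
            (eventually_nhdsWithin_of_forall hun0)
    have hIccsub : Set.Icc c m ⊆ Set.Ico c b :=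
      fun s hs => ⟨hs.1, lt_of_le_of_lt hs.2 hmb⟩
    have hIoosub : Set.Ioo c m ⊆ Set.Ico c b :=
      fun s hs => ⟨hs.1.le, lt_trans hs.2 hmb⟩
    have hvmono_m : MonotoneOn v (Set.Icc c m) := by
      apply monotoneOn_of_deriv_nonneg (convex_Icc c m)
      · intro s hs
        exact (hpu s (hIccsub hs)).continuousAt.continuousWithinAt
      · intro s hs
        rw [interior_Icc] at hs
        exact (hpu s (hIoosub hs)).differentiableWithinAt
      · intro s hs
        rw [interior_Icc] at hs
        rw [heq s (hIoosub hs)]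
        have h1 : 0 ≤ q s - γ := by linarith [hqγ s (hIoosub hs)]
        exact mul_nonneg h1 (hun0' s ⟨hs.1.le, hs.2.le⟩)
    have hv0m : ∀ s ∈ Set.Icc c m, 0 ≤ v s := by
      intro s hs
      have := hvmono_m ⟨le_refl c, hcm⟩ hs hs.1
      rw [hvc] at this
      exact this
    have humono : MonotoneOn u (Set.Icc c m) := by
      apply monotoneOn_of_deriv_nonneg (convex_Icc c m)
      · exact fun s hs => (hu s (hIccsub hs)).continuousAt.continuousWithinAt
      · intro s hs
        rw [interior_Icc] at hs
        exact (hu s (hIoosub hs)).differentiableWithinAt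
      · intro s hs
        rw [interior_Icc] at hs
        rw [hderiv_u_eq s (hIoosub hs)]
        exact div_nonneg (hv0m s ⟨hs.1.le, hs.2.le⟩) (hppos s (hIoosub hs)).le
    have hu1m : ∀ s ∈ Set.Icc c m, 1 ≤ u s := by
      intro s hs
      have := humono ⟨le_refl c, hcm⟩ hs hs.1
      rw [hu0] at this
      exact this
    have hmeq : m = t' := by
      by_contra hne
      have hmlt : m < t' := lt_of_le_of_ne hmt' hne
      have hcontu : ContinuousAt u m := (hu m ⟨hcm, hmb⟩).continuousAt
      have hmem : u ⁻¹' Set.Ioi (0:ℝ) ∈ nhds m := by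
        apply hcontu.preimage_mem_nhds
        apply Ioi_mem_nhds
        have := hu1m m ⟨hcm, le_refl m⟩
        linarith
      obtain ⟨ε, hεpos, hball⟩ := Metric.mem_nhds_iff.1 hmem
      set m'' : ℝ := min t' (m + ε / 2) with hm''def
      have hmm'' : m < m'' := lt_min hmlt (by linarith)
      have hm''S : m'' ∈ S := by
        refine ⟨⟨le_trans hcm hmm''.le, min_le_left _ _⟩, ?_⟩
        intro s hs
        rcases le_or_gt s m with h | h
        · exact hun0' s ⟨hs.1, h⟩
        · have hsball : s ∈ Metric.ball m ε := by
            rw [Metric.mem_ball, Real.dist_eq, abs_of_pos (by linarith)]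
            have : s ≤ m + ε / 2 := le_trans hs.2 (min_le_right _ _)
            linarith
          exact (hball hsball).le
      have := le_csSup hSbdd hm''S
      rw [← hmdef] at this
      linarith
    rw [hmeq] at hu1m hv0m
    exact ⟨hu1m, hv0m t' ⟨ht'.1, le_refl t'⟩⟩
  have hu1 : ∀ t ∈ Set.Ico c b, 1 ≤ u t := fun t ht =>
    (stepA t ht).1 t ⟨ht.1, le_refl t⟩
  have hv0 : ∀ t ∈ Set.Ico c b, 0 ≤ v t := fun t ht => (stepA t ht).2
  -- monotonicity of v on initial segments
  have hvmono : ∀ t' ∈ Set.Ico c b, MonotoneOn v (Set.Icc c t') := by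
    intro t' ht'
    have hIccsub : Set.Icc c t' ⊆ Set.Ico c b :=
      fun s hs => ⟨hs.1, lt_of_le_of_lt hs.2 ht'.2⟩
    have hIoosub : Set.Ioo c t' ⊆ Set.Ico c b :=
      fun s hs => ⟨hs.1.le, lt_trans hs.2 ht'.2⟩
    apply monotoneOn_of_deriv_nonneg (convex_Icc c t')
    · exact fun s hs => (hpu s (hIccsub hs)).continuousAt.continuousWithinAt
    · intro s hs
      rw [interior_Icc] at hs
      exact (hpu s (hIoosub hs)).differentiableWithinAt
    · intro s hs
      rw [interior_Icc] at hs
      rw [heq s (hIoosub hs)]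
      have h1 := hqγ s (hIoosub hs)
      have h2 := hu1 s (hIoosub hs)
      nlinarith
  -- Step B: positive lower bound for v beyond the midpoint t0
  set t0 : ℝ := (c + b) / 2 with ht0def
  have hct0 : c < t0 := by rw [ht0def]; linarith
  have ht0b : t0 < b := by rw [ht0def]; linarith
  have ht0mem : t0 ∈ Set.Ico c b := ⟨hct0.le, ht0b⟩
  obtain ⟨K, hKpos, hvK⟩ : ∃ K : ℝ, 0 < K ∧ ∀ t ∈ Set.Ico t0 b, K ≤ v t := by
    obtain ⟨x0, hx0mem, hx0min⟩ := isCompact_Icc.exists_isMinOn ⟨c, ⟨le_refl c, hct0.le⟩⟩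
      (hq.mono (fun s hs => ⟨hs.1, le_trans hs.2 ht0b.le⟩))
    have hx0Ico : x0 ∈ Set.Ico c b := ⟨hx0mem.1, lt_of_le_of_lt hx0mem.2 ht0b⟩
    set ε : ℝ := q x0 - γ with hεdef
    have hεpos : 0 < ε := by have := hqγ x0 hx0Ico; linarith
    refine ⟨ε * (t0 - c), mul_pos hεpos (by linarith), ?_⟩
    have hvt0 : ε * (t0 - c) ≤ v t0 := by
      set g : ℝ → ℝ := fun t => v t - ε * (t - c) with hgdef
      have hgmono : MonotoneOn g (Set.Icc c t0) := by
        have hIccsub : Set.Icc c t0 ⊆ Set.Ico c b :=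
          fun s hs => ⟨hs.1, lt_of_le_of_lt hs.2 ht0b⟩
        have hIoosub : Set.Ioo c t0 ⊆ Set.Ico c b :=
          fun s hs => ⟨hs.1.le, lt_trans hs.2 ht0b⟩
        apply monotoneOn_of_deriv_nonneg (convex_Icc c t0)
        · intro s hs
          apply ContinuousAt.continuousWithinAt
          exact ((hpu s (hIccsub hs)).continuousAt).sub
            ((continuous_const.mul (continuous_id.sub continuous_const)).continuousAt)
        · intro s hs
          rw [interior_Icc] at hs
          apply DifferentiableAt.differentiableWithinAt
          exact (hpu s (hIoosub hs)).sub
            (((differentiable_id.sub_const c).const_mul ε).differentiableAt)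
        · intro s hs
          rw [interior_Icc] at hs
          have hds : HasDerivAt g (deriv v s - ε) s := by
            have h1 : HasDerivAt (fun t : ℝ => ε * (t - c)) ε s := by
              simpa using ((hasDerivAt_id s).sub_const c).const_mul ε
            exact ((hpu s (hIoosub hs)).hasDerivAt).sub h1
          rw [hds.deriv]
          rw [heq s (hIoosub hs)]
          have h1 : ε ≤ q s - γ := by
            have h5 := hx0min ⟨hs.1.le, hs.2.le⟩
            simp only [Set.mem_setOf_eq] at h5
            simp only [hεdef]
            linarith
          have h2 := hu1 s (hIoosub hs)
          nlinarith
      have := hgmono ⟨le_refl c, hct0.le⟩ ⟨hct0.le, le_refl t0⟩ hct0.le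
      simp only [hgdef, hvc] at this
      linarith
    intro t ht
    have htIco : t ∈ Set.Ico c b := ⟨le_trans hct0.le ht.1, ht.2⟩
    have := hvmono t htIco ⟨hct0.le, ht.1⟩ ⟨htIco.1, le_refl t⟩ ht.1
    linarith
  -- bound φ from above
  obtain ⟨M, hMpos, hM⟩ : ∃ M : ℝ, 0 < M ∧ ∀ t ∈ Set.Icc c b, φ t ≤ M := by
    obtain ⟨xM, hxMmem, hxMmax⟩ := isCompact_Icc.exists_isMaxOn ⟨c, ⟨le_refl c, hcb.le⟩⟩
      hφ.continuousOn
    exact ⟨φ xM, hφpos xM hxMmem, fun t ht => hxMmax ht⟩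
  set α : ℝ := K / (M * ((n : ℝ) - 1)) with hαdef
  have hn1 : (1:ℝ) ≤ (n:ℝ) - 1 := by
    have : (2:ℝ) ≤ (n:ℝ) := by exact_mod_cast hn
    linarith
  have hαpos : 0 < α := div_pos hKpos (mul_pos hMpos (by linarith))
  set w : ℝ → ℝ := fun t => α * ((b - t) ^ (n - 1))⁻¹ with hwdef
  -- derivative of w
  have hwderiv : ∀ s ∈ Set.Iio b, HasDerivAt w (α * ((n:ℝ) - 1) * ((b - s) ^ n)⁻¹) s := by
    intro s hs
    have hb : 0 < b - s := by simpa [sub_pos] using hs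
    have h1 : HasDerivAt (fun t : ℝ => b - t) (-1) s := by
      simpa using (hasDerivAt_id s).const_sub b
    have h2 : HasDerivAt (fun t => (b - t) ^ (n - 1))
        ((((n - 1 : ℕ) : ℝ) * (b - s) ^ (n - 1 - 1)) * (-1)) s :=
      (hasDerivAt_pow (n - 1) (b - s)).comp s h1
    have hne : (b - s) ^ (n - 1) ≠ 0 := pow_ne_zero _ hb.ne'
    have h3 := (h2.inv hne).const_mul α
    refine h3.congr_deriv ?_
    symm
    have hcast : ((n - 1 : ℕ) : ℝ) = (n : ℝ) - 1 := by
      have h4 : 1 ≤ n := by omega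
      push_cast [h4]
      ring
    have hexp : (n - 1) * 2 = (n - 1 - 1) + n := by omega
    rw [hcast]
    field_simp
    rw [← pow_mul, hexp, pow_add]
    ring
  -- lower bound on u via comparison with w
  have hulow : ∀ t ∈ Set.Ico t0 b, w t - w t0 + 1 ≤ u t := by
    intro t ht
    have hIccsub : Set.Icc t0 t ⊆ Set.Ico c b :=
      fun s hs => ⟨le_trans hct0.le hs.1, lt_of_le_of_lt hs.2 ht.2⟩
    have hIoosub : Set.Ioo t0 t ⊆ Set.Ico c b :=
      fun s hs => ⟨le_trans hct0.le hs.1.le, lt_trans hs.2 ht.2⟩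
    have hFmono : MonotoneOn (fun s => u s - w s) (Set.Icc t0 t) := by
      apply monotoneOn_of_deriv_nonneg (convex_Icc t0 t)
      · intro s hs
        exact ((hu s (hIccsub hs)).continuousAt.sub
          (hwderiv s (hIccsub hs).2).continuousAt).continuousWithinAt
      · intro s hs
        rw [interior_Icc] at hs
        exact ((hu s (hIoosub hs)).sub
          (hwderiv s (hIoosub hs).2).differentiableAt).differentiableWithinAt
      · intro s hs
        rw [interior_Icc] at hs
        have hsIco : s ∈ Set.Ico c b := hIoosub hs
        have hds : HasDerivAt (fun s => u s - w s)
            (deriv u s - α * ((n:ℝ) - 1) * ((b - s) ^ n)⁻¹) s :=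
          (hu s hsIco).hasDerivAt.sub (hwderiv s hsIco.2)
        rw [hds.deriv]
        have hbs : 0 < b - s := by simpa [sub_pos] using hsIco.2
        have hps : 0 < p s := hppos s hsIco
        have hvs : K ≤ v s := hvK s ⟨hs.1.le, hsIco.2⟩
        have hderiv : deriv u s = v s / p s := hderiv_u_eq s hsIco
        have hpb : p s ≤ (b - s) ^ n * M := by
          rw [hpdef]
          exact mul_le_mul_of_nonneg_left (hM s ⟨hsIco.1, hsIco.2.le⟩) (pow_pos hbs n).le
        have hkey : α * ((n:ℝ) - 1) * ((b - s) ^ n)⁻¹ ≤ deriv u s := by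
          rw [hderiv]
          have hMne : M ≠ 0 := hMpos.ne'
          have hn1ne : (n:ℝ) - 1 ≠ 0 := by linarith
          have hxne : (b - s) ^ n ≠ 0 := (pow_pos hbs n).ne'
          have heqα : α * ((n:ℝ) - 1) * ((b - s) ^ n)⁻¹ = K / ((b - s) ^ n * M) := by
            rw [hαdef]
            field_simp
          rw [heqα]
          calc K / ((b - s) ^ n * M) ≤ K / p s :=
               div_le_div_of_nonneg_left hKpos.le hps hpb
          _ ≤ v s / p s := by gcongr
        linarith
    have h1 := hFmono ⟨le_refl t0, ht.1⟩ ⟨ht.1, le_refl t⟩ ht.1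
    have h2 := hu1 t0 ht0mem
    simp only at h1
    linarith
  -- Step E: conclusion
  set β : ℝ := w t0 with hβdef
  have hbt0 : 0 < b - t0 := by linarith
  have hβpos : 0 < β := by
    rw [hβdef, hwdef]
    exact mul_pos hαpos (inv_pos.2 (pow_pos hbt0 _))
  set δ : ℝ := min 1 (α / (2 * β)) with hδdef
  have hδpos : 0 < δ := lt_min one_pos (div_pos hαpos (by linarith))
  set t1 : ℝ := max t0 (b - δ / 2) with ht1def
  have ht1b : t1 < b := max_lt ht0b (by linarith)
  have hct1 : c < t1 := lt_of_lt_of_le hct0 (le_max_left _ _)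
  have hkey : ∀ t ∈ Set.Ioo t1 b, (α / 2) ^ 2 * (b - t)⁻¹ ≤ u t ^ 2 := by
    intro t htm
    have ht0t : t0 ≤ t := le_trans (le_max_left _ _) htm.1.le
    have hbt : 0 < b - t := by linarith [htm.2]
    have hbtδ : b - t < δ := by
      have h5 : b - δ / 2 ≤ t1 := le_max_right _ _
      have h6 := htm.1
      linarith
    have hbt1 : b - t ≤ 1 := le_trans hbtδ.le (min_le_left _ _)
    have hbtα : b - t ≤ α / (2 * β) := le_trans hbtδ.le (min_le_right _ _)
    have hpow : (b - t) ^ (n - 1) ≤ b - t := by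
      calc (b - t) ^ (n - 1) ≤ (b - t) ^ 1 := pow_le_pow_of_le_one hbt.le hbt1 (by omega)
      _ = b - t := pow_one _
    have hinv : (b - t)⁻¹ ≤ ((b - t) ^ (n - 1))⁻¹ :=
      inv_anti₀ (pow_pos hbt (n - 1)) hpow
    have hβbound : β ≤ α / 2 * (b - t)⁻¹ := by
      have h0 : β * (b - t) ≤ α / 2 := by
        calc β * (b - t) ≤ β * (α / (2 * β)) := mul_le_mul_of_nonneg_left hbtα hβpos.le
        _ = α / 2 := by field_simp
      calc β = β * (b - t) * (b - t)⁻¹ := by field_simp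
      _ ≤ α / 2 * (b - t)⁻¹ := mul_le_mul_of_nonneg_right h0 (inv_pos.2 hbt).le
    have hαt : α / 2 * (b - t)⁻¹ ≤ u t := by
      have h1 := hulow t ⟨ht0t, htm.2⟩
      have h2 : α * (b - t)⁻¹ ≤ w t := by
        rw [hwdef]
        exact mul_le_mul_of_nonneg_left hinv hαpos.le
      have h3 : α * (b - t)⁻¹ - α / 2 * (b - t)⁻¹ = α / 2 * (b - t)⁻¹ := by ring
      linarith
    have hα2 : 0 ≤ α / 2 * (b - t)⁻¹ := by positivity
    have hX1 : 1 ≤ (b - t)⁻¹ := one_le_inv_iff₀.2 ⟨hbt, hbt1⟩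
    have hxsq : (b - t)⁻¹ ≤ ((b - t)⁻¹) ^ 2 := by
      nlinarith [mul_le_mul_of_nonneg_left hX1 (inv_pos.2 hbt).le]
    calc (α / 2) ^ 2 * (b - t)⁻¹ ≤ (α / 2) ^ 2 * ((b - t)⁻¹) ^ 2 :=
        mul_le_mul_of_nonneg_left hxsq (sq_nonneg _)
    _ = (α / 2 * (b - t)⁻¹) ^ 2 := by ring
    _ ≤ u t ^ 2 := pow_le_pow_left₀ hα2 hαt 2
  intro hint
  have h2 : IntegrableOn (fun x => u x ^ 2) (Set.Ioo t1 b) :=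
    hint.mono_set (Set.Ioo_subset_Ioo hct1.le (le_refl b))
  have h3 : IntegrableOn (fun x => (α / 2) ^ 2 * (b - x)⁻¹) (Set.Ioo t1 b) := by
    apply Integrable.mono' h2
    · exact (((measurable_const.sub measurable_id).inv).const_mul _).aestronglyMeasurable
    · apply (ae_restrict_iff' measurableSet_Ioo).2
      filter_upwards with t
      intro htm
      have hbt : 0 < b - t := by linarith [htm.2]
      rw [Real.norm_eq_abs, abs_of_nonneg (by positivity)]
      exact hkey t htm
  have h4 : IntegrableOn (fun x : ℝ => (x - b)⁻¹) (Set.Ioo t1 b) := by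
    have hα2 : ((α : ℝ) / 2) ^ 2 ≠ 0 := by positivity
    have heqf : (fun x : ℝ => (x - b)⁻¹)
        = fun x => (-(((α : ℝ) / 2) ^ 2)⁻¹) * ((α / 2) ^ 2 * (b - x)⁻¹) := by
      funext x
      rw [show (x - b : ℝ) = -(b - x) by ring, inv_neg]
      rw [neg_mul, ← mul_assoc, inv_mul_cancel₀ hα2, one_mul]
    rw [heqf]
    exact h3.const_mul _
  have h5 : IntervalIntegrable (fun x : ℝ => (x - b)⁻¹) volume t1 b := by
    rw [intervalIntegrable_iff_integrableOn_Ioc_of_le ht1b.le]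
    rwa [integrableOn_Ioc_iff_integrableOn_Ioo]
  rcases intervalIntegrable_sub_inv_iff.1 h5 with h | h
  · exact absurd h ht1b.ne
  · exact h Set.right_mem_uIcc
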